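/- Suppose Ŝ = QᵀX + ΔS with ‖ΔS‖₂ ≤ δ‖X‖₂, T̂ = XᵀX + ΔT with ‖ΔT‖₂ ≤ δ'‖X‖₂², and ‖I - QᵀQ‖₂ ≤ ω. Then ‖(T̂ - ŜᵀŜ) - Xᵀ(I - QQᵀ)X‖₂ ≤ (δ' + 2√2(1+ω)^{1/2} δ + δ² + 2ω(1+ω))‖X‖₂²; in particular if ω, δ, δ' ≤ 1 this is at most (δ' + 4δ + δ² + 4ω)‖X‖₂². -/

import Mathlib

open Matrix

/-- Spectral norm (largest singular value) of a real matrix. -/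
noncomputable def sn {m n : ℕ} (A : Matrix (Fin m) (Fin n) ℝ) : ℝ :=
  sSup {c | ∃ x : EuclideanSpace ℝ (Fin n), ‖x‖ = 1 ∧
    c = ‖(WithLp.equiv 2 (Fin m → ℝ)).symm (A.mulVec ((WithLp.equiv 2 (Fin n → ℝ)) x))‖}

/-- Smallest singular value of a real matrix. -/
noncomputable def smin {m n : ℕ} (A : Matrix (Fin m) (Fin n) ℝ) : ℝ :=
  sInf {c | ∃ x : EuclideanSpace ℝ (Fin n), ‖x‖ = 1 ∧
    c = ‖(WithLp.equiv 2 (Fin m → ℝ)).symm (A.mulVec ((WithLp.equiv 2 (Fin n → ℝ)) x))‖}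

/-- Smallest eigenvalue (Rayleigh quotient infimum) of a square real matrix. -/
noncomputable def lmin {n : ℕ} (A : Matrix (Fin n) (Fin n) ℝ) : ℝ :=
  sInf {c | ∃ x : EuclideanSpace ℝ (Fin n), ‖x‖ = 1 ∧
    c = (inner ℝ x ((WithLp.equiv 2 (Fin n → ℝ)).symm (A.mulVec ((WithLp.equiv 2 (Fin n → ℝ)) x))) : ℝ)}

section Aux
open scoped Matrix.Norms.L2Operator

lemma sn_eq_norm {m n : ℕ} (A : Matrix (Fin m) (Fin n) ℝ) : sn A = ‖A‖ := by
  have hset : {c | ∃ x : EuclideanSpace ℝ (Fin n), ‖x‖ = 1 ∧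
      c = ‖(WithLp.equiv 2 (Fin m → ℝ)).symm (A.mulVec ((WithLp.equiv 2 (Fin n → ℝ)) x))‖}
      = (fun x : EuclideanSpace ℝ (Fin n) => ‖toEuclideanLin A x‖) '' {x | ‖x‖ = 1} := by
    ext c
    simp only [Set.mem_setOf_eq, Set.mem_image]
    constructor
    · rintro ⟨x, hx, rfl⟩; exact ⟨x, hx, rfl⟩
    · rintro ⟨x, hx, rfl⟩; exact ⟨x, hx, rfl⟩
  rcases Nat.eq_zero_or_pos n with hn | hn
  · subst hn
    have hA : A = 0 := by ext i j; exact j.elim0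
    have : {c | ∃ x : EuclideanSpace ℝ (Fin 0), ‖x‖ = 1 ∧
      c = ‖(WithLp.equiv 2 (Fin m → ℝ)).symm (A.mulVec ((WithLp.equiv 2 (Fin 0 → ℝ)) x))‖} = ∅ := by
      ext c
      simp only [Set.mem_setOf_eq, Set.mem_empty_iff_false, iff_false]
      rintro ⟨x, hx, -⟩
      have : x = 0 := Subsingleton.elim x 0
      rw [this] at hx; simp at hx
    rw [sn, this, Real.sSup_empty, hA, norm_zero]
  · apply le_antisymm
    · apply csSup_le
      · rw [hset]
        refine Set.Nonempty.image _ ⟨EuclideanSpace.single ⟨0, hn⟩ (1:ℝ), by simp⟩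
      · rintro c ⟨x, hx, rfl⟩
        calc ‖(WithLp.equiv 2 (Fin m → ℝ)).symm (A.mulVec ((WithLp.equiv 2 (Fin n → ℝ)) x))‖
            = ‖toEuclideanLin A x‖ := rfl
          _ ≤ ‖A‖ * ‖x‖ := A.l2_opNorm_mulVec x
          _ = ‖A‖ := by rw [hx, mul_one]
    · rw [l2_opNorm_def]
      apply ContinuousLinearMap.opNorm_le_bound
      · -- 0 ≤ sn A
        apply Real.sSup_nonneg
        rintro c ⟨x, hx, rfl⟩; positivity
      · intro x
        rcases eq_or_ne x 0 with rfl | hx0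
        · simp
        · have hxn : ‖x‖ ≠ 0 := norm_ne_zero_iff.mpr hx0
          have hunit : ‖(‖x‖⁻¹ • x : EuclideanSpace ℝ (Fin n))‖ = 1 := by
            rw [norm_smul, norm_inv, norm_norm, inv_mul_cancel₀ hxn]
          have hmem : ‖toEuclideanLin A (‖x‖⁻¹ • x)‖ ∈ {c | ∃ y : EuclideanSpace ℝ (Fin n), ‖y‖ = 1 ∧
              c = ‖(WithLp.equiv 2 (Fin m → ℝ)).symm (A.mulVec ((WithLp.equiv 2 (Fin n → ℝ)) y))‖} :=
            ⟨_, hunit, rfl⟩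
          have hbdd : BddAbove {c | ∃ y : EuclideanSpace ℝ (Fin n), ‖y‖ = 1 ∧
              c = ‖(WithLp.equiv 2 (Fin m → ℝ)).symm (A.mulVec ((WithLp.equiv 2 (Fin n → ℝ)) y))‖} := by
            refine ⟨‖A‖, ?_⟩
            rintro c ⟨y, hy, rfl⟩
            calc (‖(WithLp.equiv 2 (Fin m → ℝ)).symm (A.mulVec ((WithLp.equiv 2 (Fin n → ℝ)) y))‖ : ℝ)
                = ‖toEuclideanLin A y‖ := rfl
              _ ≤ ‖A‖ * ‖y‖ := A.l2_opNorm_mulVec y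
              _ = ‖A‖ := by rw [hy, mul_one]
          have hle : ‖toEuclideanLin A (‖x‖⁻¹ • x)‖ ≤ sn A := le_csSup hbdd hmem
          have key : ‖toEuclideanLin A x‖ ≤ sn A * ‖x‖ := by
            have h2 : toEuclideanLin A (‖x‖⁻¹ • x) = ‖x‖⁻¹ • toEuclideanLin A x :=
              (toEuclideanLin A).map_smul _ _
            rw [h2, norm_smul, norm_inv, norm_norm] at hle
            rw [mul_comm]
            calc ‖toEuclideanLin A x‖ = ‖x‖ * (‖x‖⁻¹ * ‖toEuclideanLin A x‖) := by
                  field_simp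
              _ ≤ ‖x‖ * sn A := mul_le_mul_of_nonneg_left hle (norm_nonneg x)
          exact key

lemma sn_nonneg {m n : ℕ} (A : Matrix (Fin m) (Fin n) ℝ) : 0 ≤ sn A := by
  rw [sn_eq_norm]; exact norm_nonneg _

lemma sn_transpose {m n : ℕ} (A : Matrix (Fin m) (Fin n) ℝ) : sn Aᵀ = sn A := by
  rw [sn_eq_norm, sn_eq_norm, ← conjTranspose_eq_transpose_of_trivial,
    l2_opNorm_conjTranspose]

lemma sn_mul_le {m n l : ℕ} (A : Matrix (Fin m) (Fin n) ℝ) (B : Matrix (Fin n) (Fin l) ℝ) :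
    sn (A * B) ≤ sn A * sn B := by
  rw [sn_eq_norm, sn_eq_norm, sn_eq_norm]; exact l2_opNorm_mul A B

lemma sn_sq {m n : ℕ} (A : Matrix (Fin m) (Fin n) ℝ) : sn (Aᵀ * A) = sn A * sn A := by
  rw [sn_eq_norm, sn_eq_norm, ← conjTranspose_eq_transpose_of_trivial,
    l2_opNorm_conjTranspose_mul_self]

lemma sn_one_le {n : ℕ} : sn (1 : Matrix (Fin n) (Fin n) ℝ) ≤ 1 := by
  apply Real.sSup_le _ zero_le_one
  rintro c ⟨x, hx, rfl⟩
  simp [Matrix.one_mulVec, hx]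

lemma sn_sub_le {m n : ℕ} (A B : Matrix (Fin m) (Fin n) ℝ) : sn (A - B) ≤ sn A + sn B := by
  rw [sn_eq_norm, sn_eq_norm, sn_eq_norm]; exact norm_sub_le A B

end Aux

set_option maxHeartbeats 1600000 in
theorem computed_pythagorean_gram_deviation
    {m t s : ℕ} (Q : Matrix (Fin m) (Fin t) ℝ) (X : Matrix (Fin m) (Fin s) ℝ)
    (Shat ΔS : Matrix (Fin t) (Fin s) ℝ)
    (That ΔT : Matrix (Fin s) (Fin s) ℝ)
    (δ δ' ω : ℝ)
    (hS : Shat = Qᵀ * X + ΔS) (hΔS : sn ΔS ≤ δ * sn X)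
    (hT : That = Xᵀ * X + ΔT) (hΔT : sn ΔT ≤ δ' * sn X ^ 2)
    (hQ : sn ((1 : Matrix (Fin t) (Fin t) ℝ) - Qᵀ * Q) ≤ ω) :
    sn ((That - Shatᵀ * Shat)
          - Xᵀ * ((1 : Matrix (Fin m) (Fin m) ℝ) - Q * Qᵀ) * X)
      ≤ (δ' + 2 * Real.sqrt 2 * Real.sqrt (1 + ω) * δ + δ ^ 2 + 2 * ω * (1 + ω))
          * sn X ^ 2
    ∧ (ω ≤ 1 → δ ≤ 1 → δ' ≤ 1 →
        sn ((That - Shatᵀ * Shat)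
              - Xᵀ * ((1 : Matrix (Fin m) (Fin m) ℝ) - Q * Qᵀ) * X)
          ≤ (δ' + 4 * δ + δ ^ 2 + 4 * ω) * sn X ^ 2) := by
  have hE : (That - Shatᵀ * Shat) - Xᵀ * ((1 : Matrix (Fin m) (Fin m) ℝ) - Q * Qᵀ) * X
      = ΔT - (Xᵀ * Q) * ΔS - ΔSᵀ * (Qᵀ * X) - ΔSᵀ * ΔS := by
    subst hS hT
    simp only [transpose_add, transpose_mul, transpose_transpose, Matrix.add_mul,
      Matrix.mul_add, Matrix.sub_mul, Matrix.mul_sub, Matrix.mul_one, Matrix.one_mul,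
      Matrix.mul_assoc]
    abel
  -- basic positivity facts
  have hω0 : 0 ≤ ω := le_trans (sn_nonneg _) hQ
  have hX0 : 0 ≤ sn X := sn_nonneg X
  have hΔS0 : 0 ≤ sn ΔS := sn_nonneg ΔS
  have hδX : 0 ≤ δ * sn X := le_trans hΔS0 hΔS
  have hQ0 : 0 ≤ sn Q := sn_nonneg Q
  -- sn Q ≤ sqrt (1+ω)
  have hQQ : sn (Qᵀ * Q) ≤ 1 + ω := by
    have h1 : Qᵀ * Q = (1 : Matrix (Fin t) (Fin t) ℝ)
        - ((1 : Matrix (Fin t) (Fin t) ℝ) - Qᵀ * Q) := (sub_sub_cancel _ _).symm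
    calc sn (Qᵀ * Q) = sn ((1 : Matrix (Fin t) (Fin t) ℝ)
          - ((1 : Matrix (Fin t) (Fin t) ℝ) - Qᵀ * Q)) := by rw [← h1]
      _ ≤ sn (1 : Matrix (Fin t) (Fin t) ℝ)
          + sn ((1 : Matrix (Fin t) (Fin t) ℝ) - Qᵀ * Q) := sn_sub_le _ _
      _ ≤ 1 + ω := add_le_add sn_one_le hQ
  have hq : sn Q ≤ Real.sqrt (1 + ω) := by
    have h2 : sn Q * sn Q ≤ 1 + ω := by rw [← sn_sq]; exact hQQ
    nlinarith [Real.sq_sqrt (by linarith : (0:ℝ) ≤ 1 + ω), Real.sqrt_nonneg (1 + ω)]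
  have hs1 : (1:ℝ) ≤ Real.sqrt (1 + ω) := by
    have := Real.sqrt_le_sqrt (show (1:ℝ) ≤ 1 + ω by linarith)
    rwa [Real.sqrt_one] at this
  -- spectral norm bound on the error matrix
  have hb : sn ((That - Shatᵀ * Shat) - Xᵀ * ((1 : Matrix (Fin m) (Fin m) ℝ) - Q * Qᵀ) * X)
      ≤ sn ΔT + sn X * sn Q * sn ΔS + sn ΔS * (sn Q * sn X) + sn ΔS * sn ΔS := by
    rw [hE]
    calc sn (ΔT - (Xᵀ * Q) * ΔS - ΔSᵀ * (Qᵀ * X) - ΔSᵀ * ΔS)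
        ≤ sn (ΔT - (Xᵀ * Q) * ΔS - ΔSᵀ * (Qᵀ * X)) + sn (ΔSᵀ * ΔS) := sn_sub_le _ _
      _ ≤ sn (ΔT - (Xᵀ * Q) * ΔS) + sn (ΔSᵀ * (Qᵀ * X)) + sn (ΔSᵀ * ΔS) :=
          add_le_add_left (sn_sub_le _ _) _
      _ ≤ (sn ΔT + sn ((Xᵀ * Q) * ΔS)) + sn (ΔSᵀ * (Qᵀ * X)) + sn (ΔSᵀ * ΔS) :=
          add_le_add_left (add_le_add_left (sn_sub_le _ _) _) _
      _ ≤ sn ΔT + sn X * sn Q * sn ΔS + sn ΔS * (sn Q * sn X) + sn ΔS * sn ΔS := by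
          have t1 : sn ((Xᵀ * Q) * ΔS) ≤ sn X * sn Q * sn ΔS := by
            calc sn ((Xᵀ * Q) * ΔS) ≤ sn (Xᵀ * Q) * sn ΔS :=
                  sn_mul_le _ _
              _ ≤ (sn Xᵀ * sn Q) * sn ΔS :=
                  mul_le_mul_of_nonneg_right (sn_mul_le _ _) hΔS0
              _ = sn X * sn Q * sn ΔS := by rw [sn_transpose]
          have t2 : sn (ΔSᵀ * (Qᵀ * X)) ≤ sn ΔS * (sn Q * sn X) := by
            calc sn (ΔSᵀ * (Qᵀ * X)) ≤ sn ΔSᵀ * sn (Qᵀ * X) := sn_mul_le _ _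
              _ ≤ sn ΔSᵀ * (sn Qᵀ * sn X) :=
                  mul_le_mul_of_nonneg_left (sn_mul_le _ _) (sn_nonneg _)
              _ = sn ΔS * (sn Q * sn X) := by rw [sn_transpose, sn_transpose]
          have t3 : sn (ΔSᵀ * ΔS) = sn ΔS * sn ΔS := sn_sq ΔS
          linarith
  -- the three key product estimates
  have e1 : sn ΔS * sn ΔS ≤ δ ^ 2 * sn X ^ 2 := by nlinarith
  have e2 : sn X * sn Q * sn ΔS ≤ Real.sqrt (1 + ω) * δ * sn X ^ 2 := by
    have h1 : sn Q * sn ΔS ≤ Real.sqrt (1 + ω) * (δ * sn X) :=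
      mul_le_mul hq hΔS hΔS0 (Real.sqrt_nonneg _)
    have h2 : sn X * (sn Q * sn ΔS) ≤ sn X * (Real.sqrt (1 + ω) * (δ * sn X)) :=
      mul_le_mul_of_nonneg_left h1 hX0
    nlinarith
  have e3 : sn ΔS * (sn Q * sn X) ≤ Real.sqrt (1 + ω) * δ * sn X ^ 2 := by
    have h1 : sn Q * sn X ≤ Real.sqrt (1 + ω) * sn X :=
      mul_le_mul_of_nonneg_right hq hX0
    have h2 : sn ΔS * (sn Q * sn X) ≤ (δ * sn X) * (Real.sqrt (1 + ω) * sn X) :=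
      mul_le_mul hΔS h1 (mul_nonneg hQ0 hX0) hδX
    nlinarith
  have e4 : Real.sqrt (1 + ω) * δ * sn X ^ 2
      ≤ Real.sqrt 2 * Real.sqrt (1 + ω) * δ * sn X ^ 2 := by
    have hδX2 : 0 ≤ δ * sn X ^ 2 := by nlinarith
    have h2 : (1:ℝ) ≤ Real.sqrt 2 := by
      have := Real.sqrt_le_sqrt (show (1:ℝ) ≤ 2 by norm_num)
      rwa [Real.sqrt_one] at this
    nlinarith [mul_nonneg (sub_nonneg.mpr h2) (mul_nonneg (Real.sqrt_nonneg (1 + ω)) hδX2)]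
  have e5 : 0 ≤ 2 * ω * (1 + ω) * sn X ^ 2 := by positivity
  have part1 : sn ((That - Shatᵀ * Shat) - Xᵀ * ((1 : Matrix (Fin m) (Fin m) ℝ) - Q * Qᵀ) * X)
      ≤ (δ' + 2 * Real.sqrt 2 * Real.sqrt (1 + ω) * δ + δ ^ 2 + 2 * ω * (1 + ω)) * sn X ^ 2 := by
    nlinarith
  refine ⟨part1, fun hω1 hδ1 hδ'1 => ?_⟩
  have hδX2 : 0 ≤ δ * sn X ^ 2 := by nlinarith
  have f1 : 2 * Real.sqrt 2 * Real.sqrt (1 + ω) * δ * sn X ^ 2 ≤ 4 * δ * sn X ^ 2 := by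
    have h1 : Real.sqrt (1 + ω) ≤ Real.sqrt 2 := Real.sqrt_le_sqrt (by linarith)
    have h2 : Real.sqrt 2 * Real.sqrt 2 = 2 := Real.mul_self_sqrt (by norm_num)
    nlinarith [Real.sqrt_nonneg (2:ℝ), Real.sqrt_nonneg (1 + ω)]
  have f2 : 2 * ω * (1 + ω) * sn X ^ 2 ≤ 4 * ω * sn X ^ 2 := by nlinarith
  nlinarith
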